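/- Gumbel-max trick: if Y_i = q_i + G_i where G_i are i.i.d. Gumbel random variables with scale parameter b (density (1/b)exp(−(y/b + e^{−y/b}))), then Pr(argmax_i Y_i = j) = exp(q_j/b) / Σ_i exp(q_i/b). -/

import Mathlib

open MeasureTheory ProbabilityTheory Real

/-- The Gumbel distribution with scale `b`, with density `(1/b) exp(-(y/b + e^{-y/b}))`. -/
noncomputable def gumbelMeasure (b : ℝ) : Measure ℝ :=
  volume.withDensity fun y => ENNReal.ofReal ((1 / b) * exp (-(y / b + exp (-(y / b)))))

namespace GumbelAux

open Filter Set

variable {A b : ℝ}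

/-- The function `(1/b) e^{-t/b} e^{-A e^{-t/b}}`. -/
noncomputable def f (A b t : ℝ) : ℝ := 1 / b * exp (-(t / b)) * exp (-(A * exp (-(t / b))))

/-- An antiderivative of `f A b`. -/
noncomputable def F (A b t : ℝ) : ℝ := 1 / A * exp (-(A * exp (-(t / b))))

lemma f_nonneg (hb : 0 ≤ b) (A t : ℝ) : 0 ≤ f A b t := by
  unfold f
  positivity

lemma continuous_f (A b : ℝ) : Continuous (f A b) := by
  unfold f
  fun_prop

lemma hasDerivAt_F (hA : A ≠ 0) (hb : b ≠ 0) (t : ℝ) :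
    HasDerivAt (F A b) (f A b t) t := by
  have h1 : HasDerivAt (fun t : ℝ => t / b) (1 / b) t := (hasDerivAt_id t).div_const b
  have h3 : HasDerivAt (fun t : ℝ => exp (-(t / b))) (exp (-(t / b)) * -(1 / b)) t :=
    h1.neg.exp
  have h5 := ((h3.const_mul A).neg.exp).const_mul (1 / A)
  refine h5.congr_deriv ?_
  simp only [Pi.neg_apply]
  unfold f
  field_simp

lemma tendsto_inner_atTop (hb : 0 < b) :
    Tendsto (fun t : ℝ => exp (-(t / b))) atTop (nhds 0) := by
  apply Real.tendsto_exp_atBot.comp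
  exact tendsto_neg_atBot_iff.mpr (tendsto_id.atTop_div_const hb)

lemma tendsto_inner_atBot (hb : 0 < b) :
    Tendsto (fun t : ℝ => exp (-(t / b))) atBot atTop := by
  apply Real.tendsto_exp_atTop.comp
  have : Tendsto (fun t : ℝ => t / b) atBot atBot := tendsto_id.atBot_div_const hb
  exact tendsto_neg_atTop_iff.mpr this

lemma tendsto_F_atTop (hb : 0 < b) : Tendsto (F A b) atTop (nhds (1 / A)) := by
  have hc : Continuous (fun u : ℝ => 1 / A * exp (-(A * u))) := by fun_prop
  have := (hc.tendsto 0).comp (tendsto_inner_atTop hb)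
  unfold F
  simpa [Function.comp_def] using this

lemma tendsto_F_atBot (hA : 0 < A) (hb : 0 < b) : Tendsto (F A b) atBot (nhds 0) := by
  have h : Tendsto (fun t : ℝ => -(A * exp (-(t / b)))) atBot atBot := by
    have := (tendsto_inner_atBot hb).const_mul_atTop hA
    exact tendsto_neg_atBot_iff.mpr this
  have := Real.tendsto_exp_atBot.comp h
  have h2 := this.const_mul (1 / A)
  unfold F
  simpa [one_div] using h2

lemma integrableOn_Ioi (hA : 0 < A) (hb : 0 < b) : IntegrableOn (f A b) (Ioi 0) := by
  exact integrableOn_Ioi_deriv_of_nonneg' (fun x _ => hasDerivAt_F hA.ne' hb.ne' x)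
    (fun x _ => f_nonneg hb.le A x) (tendsto_F_atTop hb)

lemma integrableOn_Iic (hA : 0 < A) (hb : 0 < b) : IntegrableOn (f A b) (Iic 0) := by
  apply integrableOn_Iic_of_intervalIntegral_norm_bounded (F A b 0) 0
    (fun i : ℝ => ((continuous_f A b).integrableOn_Ioc))
    (tendsto_id (α := ℝ))
  filter_upwards [eventually_le_atBot (0:ℝ)] with a ha
  simp only [id_eq]
  have h1 : ∀ x ∈ Set.uIcc a 0, HasDerivAt (F A b) (f A b x) x :=
    fun x _ => hasDerivAt_F hA.ne' hb.ne' x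
  have h2 : (∫ x in a..(0:ℝ), ‖f A b x‖) = ∫ x in a..(0:ℝ), f A b x := by
    congr 1; ext x; exact abs_of_nonneg (f_nonneg hb.le A x)
  rw [h2, intervalIntegral.integral_eq_sub_of_hasDerivAt h1
    ((continuous_f A b).intervalIntegrable a 0)]
  have : 0 ≤ F A b a := by
    unfold F
    positivity
  linarith

lemma integrable_f (hA : 0 < A) (hb : 0 < b) : Integrable (f A b) := by
  rw [← integrableOn_univ, ← Set.Iic_union_Ioi (a := (0:ℝ))]
  exact (integrableOn_Iic hA hb).union (integrableOn_Ioi hA hb)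

lemma integral_f (hA : 0 < A) (hb : 0 < b) : ∫ t, f A b t = 1 / A := by
  have := integral_of_hasDerivAt_of_tendsto (f' := f A b)
    (fun x => hasDerivAt_F hA.ne' hb.ne' x) (integrable_f hA hb)
    (tendsto_F_atBot hA hb) (tendsto_F_atTop hb)
  simpa using this

lemma integral_f_Iic (hA : 0 < A) (hb : 0 < b) (a : ℝ) :
    ∫ t in Iic a, f A b t = F A b a := by
  have := integral_Iic_of_hasDerivAt_of_tendsto' (a := a) (f' := f A b)
    (fun x _ => hasDerivAt_F hA.ne' hb.ne' x) ((integrable_f hA hb).integrableOn)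
    (tendsto_F_atBot hA hb)
  simpa using this

lemma density_eq (b y : ℝ) : (1 / b) * exp (-(y / b + exp (-(y / b)))) = f 1 b y := by
  unfold f
  rw [neg_add, Real.exp_add, one_mul]
  ring

lemma gumbel_eq (b : ℝ) :
    gumbelMeasure b = volume.withDensity fun y => ENNReal.ofReal (f 1 b y) := by
  unfold gumbelMeasure
  congr 1
  ext y
  rw [density_eq]

lemma lintegral_ofReal_f (hA : 0 < A) (hb : 0 < b) :
    ∫⁻ t, ENNReal.ofReal (f A b t) = ENNReal.ofReal (1 / A) := by
  rw [← ofReal_integral_eq_lintegral_ofReal (integrable_f hA hb)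
    (Filter.Eventually.of_forall (f_nonneg hb.le A)), integral_f hA hb]

lemma isProbability_gumbel (hb : 0 < b) : IsProbabilityMeasure (gumbelMeasure b) := by
  constructor
  rw [gumbel_eq, withDensity_apply _ MeasurableSet.univ, Measure.restrict_univ,
    lintegral_ofReal_f one_pos hb]
  simp

lemma measurable_ofReal_f (A b : ℝ) : Measurable fun t => ENNReal.ofReal (f A b t) :=
  ENNReal.measurable_ofReal.comp (continuous_f A b).measurable

lemma gumbel_Iio (hb : 0 < b) (a : ℝ) :
    gumbelMeasure b (Iio a) = ENNReal.ofReal (exp (-exp (-(a / b)))) := by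
  rw [gumbel_eq, withDensity_apply _ measurableSet_Iio,
    Measure.restrict_congr_set Iio_ae_eq_Iic,
    ← ofReal_integral_eq_lintegral_ofReal (integrable_f one_pos hb).integrableOn
      (Filter.Eventually.of_forall (f_nonneg hb.le 1)),
    integral_f_Iic one_pos hb]
  unfold F
  norm_num

lemma map_eq_pi {Ω : Type*} [MeasurableSpace Ω] (P : Measure Ω)
    [IsProbabilityMeasure P] {n : ℕ} {b : ℝ} (hb : 0 < b)
    (G : Fin n → Ω → ℝ) (hmeas : ∀ i, Measurable (G i))
    (hindep : iIndepFun G P)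
    (hdist : ∀ i, Measure.map (G i) P = gumbelMeasure b) :
    Measure.map (fun ω i => G i ω) P = Measure.pi fun _ : Fin n => gumbelMeasure b := by
  haveI := isProbability_gumbel hb
  refine (Measure.pi_eq (μ' := Measure.map (fun ω i => G i ω) P)
    (μ := fun _ : Fin n => gumbelMeasure b) fun s hs => ?_).symm
  rw [Measure.map_apply (measurable_pi_lambda _ hmeas) (MeasurableSet.univ_pi hs)]
  have hpre : (fun ω i => G i ω) ⁻¹' (Set.pi univ s) = ⋂ i, G i ⁻¹' s i := by
    ext ω; simp [Set.mem_univ_pi]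
  rw [hpre, hindep.meas_iInter fun i => ⟨s i, hs i, rfl⟩]
  exact Finset.prod_congr rfl fun i _ => by
    rw [← hdist i, Measure.map_apply (hmeas i) (hs i)]

end GumbelAux

/-- Gumbel-max trick: if `Y i = q i + G i` with `G i` i.i.d. `Gumbel(b)`, then the
probability that `Y j` is the (a.s. unique) maximum is `exp(q j / b) / ∑ i exp(q i / b)`. -/
theorem gumbel_max_trick {Ω : Type*} [MeasurableSpace Ω] (P : Measure Ω)
    [IsProbabilityMeasure P] {n : ℕ} (q : Fin n → ℝ) (b : ℝ) (hb : 0 < b)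
    (G : Fin n → Ω → ℝ) (hmeas : ∀ i, Measurable (G i))
    (hindep : iIndepFun G P)
    (hdist : ∀ i, Measure.map (G i) P = gumbelMeasure b) (j : Fin n) :
    P {ω | ∀ i, i ≠ j → q i + G i ω < q j + G j ω}
      = ENNReal.ofReal (exp (q j / b) / ∑ i, exp (q i / b)) := by
  open GumbelAux Set in
  cases n with
  | zero => exact j.elim0
  | succ m =>
  haveI := isProbability_gumbel hb
  set sA := j.succAbove with hsA
  set T : Set (Fin (m+1) → ℝ) := {x | ∀ i, i ≠ j → q i + x i < q j + x j} with hTdef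
  have hT : MeasurableSet T := by
    have : T = ⋂ i, ⋂ (_ : i ≠ j), {x : Fin (m+1) → ℝ | q i + x i < q j + x j} := by
      ext x; simp [hTdef]
    rw [this]
    exact MeasurableSet.iInter fun i => MeasurableSet.iInter fun _ =>
      measurableSet_lt (by fun_prop) (by fun_prop)
  have hXT : {ω | ∀ i, i ≠ j → q i + G i ω < q j + G j ω} = (fun ω i => G i ω) ⁻¹' T := rfl
  rw [hXT, ← Measure.map_apply (measurable_pi_lambda _ hmeas) hT,
    map_eq_pi P hb G hmeas hindep hdist]
  set S : Set (ℝ × (Fin m → ℝ)) := {p | ∀ k, q (sA k) + p.2 k < q j + p.1} with hSdef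
  have hS : MeasurableSet S := by
    have : S = ⋂ k, {p : ℝ × (Fin m → ℝ) | q (sA k) + p.2 k < q j + p.1} := by
      ext p; simp [hSdef]
    rw [this]
    exact MeasurableSet.iInter fun k => measurableSet_lt (by fun_prop) (by fun_prop)
  have hTS : T = (MeasurableEquiv.piFinSuccAbove (fun _ : Fin (m+1) => ℝ) j) ⁻¹' S := by
    ext x
    simp only [hTdef, hSdef, Set.mem_setOf_eq, Set.mem_preimage,
      MeasurableEquiv.piFinSuccAbove_apply]
    constructor
    · intro h k; exact h _ (Fin.succAbove_ne j k)
    · intro h i hi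
      obtain ⟨k, rfl⟩ := Fin.exists_succAbove_eq hi
      exact h k
  have mp := measurePreserving_piFinSuccAbove (fun _ : Fin (m+1) => gumbelMeasure b) j
  rw [hTS, mp.measure_preimage hS.nullMeasurableSet, Measure.prod_apply hS]
  have hslice : ∀ t : ℝ, (Prod.mk t ⁻¹' S) = Set.pi Set.univ fun k => Iio (q j + t - q (sA k)) := by
    intro t; ext y
    simp only [hSdef, Set.mem_preimage, Set.mem_setOf_eq, Set.mem_univ_pi, Set.mem_Iio]
    exact forall_congr' fun k => lt_sub_iff_add_lt'.symm
  set S0 := ∑ k : Fin m, exp ((q (sA k) - q j) / b) with hS0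
  have hS0nn : 0 ≤ S0 := Finset.sum_nonneg fun k _ => (exp_pos _).le
  set A := 1 + S0 with hA
  have hApos : 0 < A := by positivity
  have hval : ∀ t : ℝ, (Measure.pi fun _ : Fin m => gumbelMeasure b) (Prod.mk t ⁻¹' S)
      = ENNReal.ofReal (exp (-(exp (-(t / b)) * S0))) := by
    intro t
    rw [hslice t, Measure.pi_pi]
    have hpt : ∀ k : Fin m, gumbelMeasure b (Iio (q j + t - q (sA k)))
        = ENNReal.ofReal (exp (-(exp (-(t/b)) * exp ((q (sA k) - q j)/b)))) := by
      intro k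
      rw [gumbel_Iio hb]
      congr 3
      rw [← Real.exp_add]
      congr 1
      field_simp
      ring
    simp_rw [hpt]
    rw [← ENNReal.ofReal_prod_of_nonneg (fun k _ => (exp_pos _).le), ← Real.exp_sum]
    congr 2
    rw [hS0, Finset.mul_sum, ← Finset.sum_neg_distrib]
  simp_rw [hval]
  rw [gumbel_eq, lintegral_withDensity_eq_lintegral_mul _ (measurable_ofReal_f 1 b)
    (show Measurable fun t : ℝ => ENNReal.ofReal (exp (-(exp (-(t/b)) * S0))) from
      ENNReal.measurable_ofReal.comp (by fun_prop))]
  have hcomb : ∀ t : ℝ, (ENNReal.ofReal (f 1 b t)) * ENNReal.ofReal (exp (-(exp (-(t/b)) * S0)))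
      = ENNReal.ofReal (f A b t) := by
    intro t
    rw [← ENNReal.ofReal_mul (f_nonneg hb.le 1 t)]
    congr 1
    unfold f
    rw [mul_assoc, ← Real.exp_add]
    congr 2
    rw [hA]
    ring
  simp only [Pi.mul_apply]
  simp_rw [hcomb]
  rw [lintegral_ofReal_f hApos hb]
  congr 1
  rw [Fin.sum_univ_succAbove (fun i => exp (q i / b)) j]
  have hrw : S0 = (∑ k : Fin m, exp (q (sA k) / b)) / exp (q j / b) := by
    rw [Finset.sum_div, hS0]
    refine Finset.sum_congr rfl fun k _ => ?_
    rw [sub_div, Real.exp_sub]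
  have h1 : exp (q j / b) ≠ 0 := (exp_pos _).ne'
  have h2 : 0 < exp (q j / b) + ∑ k : Fin m, exp (q (sA k) / b) := by positivity
  rw [hA, hrw]
  field_simp
  rfl
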